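/- Let D ⊆ ℂ be a domain and f a holomorphic function on D with f′(z) ≠ 0 for all z ∈ D. Then for every integer n ≥ 3 and every z ∈ D, Tamanoi's Schwarzian derivatives satisfy the recursion S_n[f](z) = (S_{n−1}[f])′(z) + (1/2) S_2[f](z) · Σ_{k=1}^{n−1} C(n,k) S_{k−1}[f](z) S_{n−k−1}[f](z), where C(n,k) denotes the binomial coefficient. -/

import Mathlib

open Topology Filter Finset
lemma anAt_iteratedDeriv {f : ℂ → ℂ} {x : ℂ} (hf : AnalyticAt ℂ f x) (n : ℕ) :
    AnalyticAt ℂ (iteratedDeriv n f) x := by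
  have h : AnalyticOnNhd ℂ f {y | AnalyticAt ℂ f y} := fun y hy => hy
  rw [iteratedDeriv_eq_iterate]; exact h.iterated_deriv n x hf

lemma iteratedDeriv_const_add_at {v : ℂ → ℂ} (b : ℂ) (m : ℕ) :
    iteratedDeriv (m+1) (fun y => b + v y) = iteratedDeriv (m+1) v := by
  rw [iteratedDeriv_succ', iteratedDeriv_succ', deriv_const_add']

lemma iteratedDeriv_add_at {u v : ℂ → ℂ} (n : ℕ) :
    ∀ {x : ℂ}, AnalyticAt ℂ u x → AnalyticAt ℂ v x →
    iteratedDeriv n (fun y => u y + v y) x = iteratedDeriv n u x + iteratedDeriv n v x := by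
  induction n with
  | zero => intro x _ _; simp
  | succ n ih =>
    intro x hu hv
    have hev : (fun y => iteratedDeriv n (fun t => u t + v t) y) =ᶠ[𝓝 x]
        (fun y => iteratedDeriv n u y + iteratedDeriv n v y) := by
      filter_upwards [hu.eventually_analyticAt, hv.eventually_analyticAt] with y h1 h2
      exact ih h1 h2
    rw [iteratedDeriv_succ, hev.deriv_eq,
      deriv_fun_add ((anAt_iteratedDeriv hu n).differentiableAt)
        ((anAt_iteratedDeriv hv n).differentiableAt),
      ← iteratedDeriv_succ, ← iteratedDeriv_succ]

lemma iteratedDeriv_const_mul_at {v : ℂ → ℂ} (c : ℂ) (n : ℕ) :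
    ∀ {x : ℂ}, AnalyticAt ℂ v x →
    iteratedDeriv n (fun y => c * v y) x = c * iteratedDeriv n v x := by
  induction n with
  | zero => intro x _; simp
  | succ n ih =>
    intro x hv
    have hev : (fun y => iteratedDeriv n (fun t => c * v t) y) =ᶠ[𝓝 x]
        (fun y => c * iteratedDeriv n v y) := by
      filter_upwards [hv.eventually_analyticAt] with y h1
      exact ih h1
    rw [iteratedDeriv_succ, hev.deriv_eq,
      deriv_const_mul c ((anAt_iteratedDeriv hv n).differentiableAt), ← iteratedDeriv_succ]

lemma iteratedDeriv_mul_at {u v : ℂ → ℂ} (n : ℕ) :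
    ∀ {x : ℂ}, AnalyticAt ℂ u x → AnalyticAt ℂ v x →
    iteratedDeriv n (fun y => u y * v y) x =
      ∑ k ∈ range (n+1), (n.choose k : ℂ) * (iteratedDeriv k u x * iteratedDeriv (n-k) v x) := by
  induction n with
  | zero => intro x _ _; simp
  | succ n ih =>
    intro x hu hv
    have hev : (fun y => iteratedDeriv n (fun t => u t * v t) y) =ᶠ[𝓝 x]
        (fun y => ∑ k ∈ range (n+1),
          (n.choose k : ℂ) * (iteratedDeriv k u y * iteratedDeriv (n-k) v y)) := by
      filter_upwards [hu.eventually_analyticAt, hv.eventually_analyticAt] with y h1 h2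
      exact ih h1 h2
    have hdu : ∀ k, DifferentiableAt ℂ (iteratedDeriv k u) x :=
      fun k => (anAt_iteratedDeriv hu k).differentiableAt
    have hdv : ∀ k, DifferentiableAt ℂ (iteratedDeriv k v) x :=
      fun k => (anAt_iteratedDeriv hv k).differentiableAt
    rw [iteratedDeriv_succ, hev.deriv_eq]
    rw [deriv_fun_sum (fun k _ => (((hdu k).fun_mul (hdv (n-k))).const_mul _))]
    have hterm : ∀ k ∈ range (n+1),
        deriv (fun y => (n.choose k : ℂ) * (iteratedDeriv k u y * iteratedDeriv (n-k) v y)) x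
        = (n.choose k : ℂ) * (iteratedDeriv (k+1) u x * iteratedDeriv (n-k) v x)
          + (n.choose k : ℂ) * (iteratedDeriv k u x * iteratedDeriv (n-k+1) v x) := by
      intro k _
      rw [deriv_const_mul _ ((hdu k).fun_mul (hdv (n-k))), deriv_fun_mul (hdu k) (hdv (n-k)),
        ← iteratedDeriv_succ, ← iteratedDeriv_succ]
      ring
    rw [Finset.sum_congr rfl hterm, Finset.sum_add_distrib]
    have key := Finset.sum_choose_succ_mul
      (fun i j => iteratedDeriv i u x * iteratedDeriv j v x) n
    have h1 : ∀ k ∈ range (n+1), (n.choose k : ℂ) * (iteratedDeriv k u x * iteratedDeriv (n-k+1) v x)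
        = (n.choose k : ℂ) * (iteratedDeriv k u x * iteratedDeriv (n+1-k) v x) := by
      intro k hk
      rw [Nat.succ_sub (Nat.lt_succ_iff.mp (Finset.mem_range.mp hk))]
    rw [Finset.sum_congr rfl h1, key]
    ring


noncomputable def pdw (g : ℂ × ℂ → ℂ) : ℂ × ℂ → ℂ := fun p => fderiv ℂ g p (0,1)
noncomputable def pdz (g : ℂ × ℂ → ℂ) : ℂ × ℂ → ℂ := fun p => fderiv ℂ g p (1,0)

lemma anOn_fderiv_apply {U : Set (ℂ × ℂ)} {g : ℂ × ℂ → ℂ} (hg : AnalyticOnNhd ℂ g U)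
    (v : ℂ × ℂ) : AnalyticOnNhd ℂ (fun p => fderiv ℂ g p v) U := by
  intro p hp
  exact ((ContinuousLinearMap.apply ℂ ℂ v).analyticAt _).comp ((hg.fderiv) p hp)

lemma anOn_pdw {U : Set (ℂ × ℂ)} {g : ℂ × ℂ → ℂ} (hg : AnalyticOnNhd ℂ g U) :
    AnalyticOnNhd ℂ (pdw g) U := anOn_fderiv_apply hg _
lemma anOn_pdz {U : Set (ℂ × ℂ)} {g : ℂ × ℂ → ℂ} (hg : AnalyticOnNhd ℂ g U) :
    AnalyticOnNhd ℂ (pdz g) U := anOn_fderiv_apply hg _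

lemma deriv_slice2 {g : ℂ × ℂ → ℂ} {z w : ℂ} (hg : DifferentiableAt ℂ g (z,w)) :
    deriv (fun t => g (z,t)) w = pdw g (z,w) := by
  have h1 : HasDerivAt (fun t : ℂ => (z,t)) ((0:ℂ),(1:ℂ)) w :=
    (hasDerivAt_const w z).prodMk (hasDerivAt_id w)
  exact (hg.hasFDerivAt.comp_hasDerivAt w h1).deriv

lemma deriv_slice1 {g : ℂ × ℂ → ℂ} {z w : ℂ} (hg : DifferentiableAt ℂ g (z,w)) :
    deriv (fun t => g (t,w)) z = pdz g (z,w) := by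
  have h1 : HasDerivAt (fun t : ℂ => (t,w)) ((1:ℂ),(0:ℂ)) z :=
    (hasDerivAt_id z).prodMk (hasDerivAt_const z w)
  exact (hg.hasFDerivAt.comp_hasDerivAt z h1).deriv

lemma schwarz_pd {U : Set (ℂ × ℂ)} {g : ℂ × ℂ → ℂ} (hg : AnalyticOnNhd ℂ g U)
    {p : ℂ × ℂ} (hp : p ∈ U) : pdz (pdw g) p = pdw (pdz g) p := by
  have hd : DifferentiableAt ℂ (fderiv ℂ g) p := ((hg.fderiv) p hp).differentiableAt
  have hsym : IsSymmSndFDerivAt ℂ g p :=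
    (hg p hp).contDiffAt.isSymmSndFDerivAt (n := (2 : WithTop ℕ∞)) (by simp)
  unfold pdz pdw
  rw [fderiv_clm_apply hd (differentiableAt_const _),
    fderiv_clm_apply hd (differentiableAt_const _)]
  simp [hsym (1,0) (0,1)]

lemma anOn_pdw_iter {U : Set (ℂ × ℂ)} {g : ℂ × ℂ → ℂ} (hg : AnalyticOnNhd ℂ g U) (n : ℕ) :
    AnalyticOnNhd ℂ (pdw^[n] g) U := by
  induction n generalizing g with
  | zero => exact hg
  | succ n ih => rw [Function.iterate_succ_apply]; exact ih (anOn_pdw hg)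

lemma eqon_pdw_iter {U : Set (ℂ × ℂ)} (hU : IsOpen U) {g h : ℂ × ℂ → ℂ}
    (hgh : Set.EqOn g h U) (n : ℕ) : Set.EqOn (pdw^[n] g) (pdw^[n] h) U := by
  induction n with
  | zero => exact hgh
  | succ n ih =>
    intro p hp
    rw [Function.iterate_succ_apply', Function.iterate_succ_apply']
    have hev : pdw^[n] g =ᶠ[𝓝 p] pdw^[n] h := by
      filter_upwards [hU.mem_nhds hp] with q hq using ih hq
    exact congrFun (congrArg _ hev.fderiv_eq) _

lemma rep_pdw_iter {U : Set (ℂ × ℂ)} (hU : IsOpen U) {g : ℂ × ℂ → ℂ}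
    (hg : AnalyticOnNhd ℂ g U) (n : ℕ) :
    ∀ z w, (z,w) ∈ U → iteratedDeriv n (fun t => g (z,t)) w = pdw^[n] g (z,w) := by
  induction n generalizing g with
  | zero => intro z w _; simp
  | succ n ih =>
    intro z w hzw
    have hev : (fun t => iteratedDeriv n (fun s => g (z,s)) t) =ᶠ[𝓝 w]
        (fun t => pdw^[n] g (z,t)) := by
      have hc : ContinuousAt (fun t : ℂ => (z,t)) w := (continuous_prodMk.mpr
        ⟨continuous_const, continuous_id⟩).continuousAt
      filter_upwards [hc.preimage_mem_nhds (hU.mem_nhds hzw)] with t ht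
      exact ih hg z t ht
    rw [iteratedDeriv_succ, hev.deriv_eq,
      deriv_slice2 ((anOn_pdw_iter hg n _ hzw).differentiableAt),
      ← Function.iterate_succ_apply' pdw n g]

lemma swap_pdw_iter {U : Set (ℂ × ℂ)} (hU : IsOpen U) {g : ℂ × ℂ → ℂ}
    (hg : AnalyticOnNhd ℂ g U) (n : ℕ) {p : ℂ × ℂ} (hp : p ∈ U) :
    pdz (pdw^[n] g) p = pdw^[n] (pdz g) p := by
  induction n generalizing g with
  | zero => rfl
  | succ n ih =>
    rw [Function.iterate_succ_apply, Function.iterate_succ_apply]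
    rw [ih (anOn_pdw hg)]
    exact eqon_pdw_iter hU (fun q hq => schwarz_pd hg hq) n hp

lemma cross_deriv {U : Set (ℂ × ℂ)} (hU : IsOpen U) {g : ℂ × ℂ → ℂ}
    (hg : AnalyticOnNhd ℂ g U) (n : ℕ) {z w : ℂ} (hzw : (z,w) ∈ U) :
    deriv (fun t => iteratedDeriv n (fun s => g (t,s)) w) z
      = iteratedDeriv n (fun s => pdz g (z,s)) w := by
  have hev : (fun t => iteratedDeriv n (fun s => g (t,s)) w) =ᶠ[𝓝 z]
      (fun t => pdw^[n] g (t,w)) := by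
    have hc : ContinuousAt (fun t : ℂ => (t,w)) z := (continuous_prodMk.mpr
      ⟨continuous_id, continuous_const⟩).continuousAt
    filter_upwards [hc.preimage_mem_nhds (hU.mem_nhds hzw)] with t ht
    exact rep_pdw_iter hU hg n t w ht
  rw [hev.deriv_eq, deriv_slice1 ((anOn_pdw_iter hg n _ hzw).differentiableAt),
    swap_pdw_iter hU hg n hzw, ← rep_pdw_iter hU (anOn_pdz hg) n z w hzw]


lemma schw_frac (A C T : ℂ) (hA : A ≠ 0) :
    T/A - (3/2)*(C/A)^2 = (2*T*A - 3*C^2)/(2*A^2) := by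
  field_simp
lemma tam_algebra' (A C T F P : ℂ) (hA : A ≠ 0) (hdd : (1/2) * C * F + A^2 ≠ 0) :
    (A * P * ((1/2)*C*F + A^2) - A * F * ((1/2)*C*P)) / ((1/2)*C*F + A^2)^2
    = 1 + ((C*F + A*(P-A)) * ((1/2)*C*F+A^2)
          - A*F*((1/2)*T*F + (1/2)*C*(P-A) + 2*A*C)) / ((1/2)*C*F+A^2)^2
      + (1/2) * ((2*T*A - 3*C^2)/(2*A^2)) * (A*F/((1/2)*C*F+A^2))^2 := by
  obtain ⟨dd, hdd_eq⟩ : ∃ dd : ℂ, dd = (1/2)*C*F + A^2 := ⟨_, rfl⟩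
  rw [← hdd_eq] at hdd ⊢
  have h2 : dd^2 ≠ 0 := pow_ne_zero 2 hdd
  apply mul_right_cancel₀ h2
  rw [div_mul_cancel₀ _ h2, add_mul, add_mul, div_mul_cancel₀ _ h2, div_pow, mul_pow,
    mul_assoc ((1:ℂ)/2 * ((2*T*A-3*C^2)/(2*A^2))), div_mul_cancel₀ _ h2]
  have hX : ((1:ℂ)/2 * ((2*T*A-3*C^2)/(2*A^2))) * (A^2*F^2) = F^2*(2*T*A-3*C^2)/4 := by
    field_simp; ring
  rw [hX, hdd_eq]
  ring

/-- The Möbius-normalized function `V(z,w) = N_z(f(z+w))` used by Tamanoi: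
`N_z(t) = f'(z)(t - f(z)) / ((1/2) f''(z)(t - f(z)) + f'(z)^2)`. -/
noncomputable def tamanoiV (f : ℂ → ℂ) (z w : ℂ) : ℂ :=
  deriv f z * (f (z + w) - f z) /
    ((1 / 2) * iteratedDeriv 2 f z * (f (z + w) - f z) + (deriv f z) ^ 2)

/-- Tamanoi's Schwarzian derivative of virtual order `n`:
`S_n[f](z) = (∂/∂w)^{n+1} V(z,w) |_{w=0}`. -/
noncomputable def tamanoiS (f : ℂ → ℂ) (n : ℕ) (z : ℂ) : ℂ :=
  iteratedDeriv (n + 1) (tamanoiV f z) 0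

noncomputable def tamDen (f : ℂ → ℂ) (p : ℂ × ℂ) : ℂ :=
  (1 / 2) * iteratedDeriv 2 f p.1 * (f (p.1 + p.2) - f p.1) + (deriv f p.1) ^ 2

def tamU (f : ℂ → ℂ) (D : Set ℂ) : Set (ℂ × ℂ) :=
  {p | p.1 ∈ D ∧ p.1 + p.2 ∈ D ∧ tamDen f p ≠ 0}

noncomputable def schw (f : ℂ → ℂ) (z : ℂ) : ℂ :=
  iteratedDeriv 3 f z / deriv f z - (3/2) * (iteratedDeriv 2 f z / deriv f z)^2

section setup
variable {D : Set ℂ} {f : ℂ → ℂ}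

lemma iD2_eq : iteratedDeriv 2 f = deriv (deriv f) := by
  rw [iteratedDeriv_succ, iteratedDeriv_one]

lemma iD3_eq : iteratedDeriv 3 f = deriv (iteratedDeriv 2 f) := iteratedDeriv_succ

variable (hD : IsOpen D) (hf : DifferentiableOn ℂ f D)
include hD hf

lemma hfa : AnalyticOnNhd ℂ f D := hf.analyticOnNhd hD

lemma hfa' : AnalyticOnNhd ℂ (deriv f) D := (hfa hD hf).deriv

lemma hfa2 : AnalyticOnNhd ℂ (iteratedDeriv 2 f) D := by
  rw [iD2_eq]; exact (hfa hD hf).deriv.deriv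

lemma tamU_open : IsOpen (tamU f D) := by
  have hW : IsOpen {p : ℂ × ℂ | p.1 ∈ D ∧ p.1 + p.2 ∈ D} := by
    apply IsOpen.inter
    · exact hD.preimage continuous_fst
    · exact hD.preimage (continuous_fst.add continuous_snd)
  have hcont : ContinuousOn (tamDen f) {p : ℂ × ℂ | p.1 ∈ D ∧ p.1 + p.2 ∈ D} := by
    have h1 : ContinuousOn f D := hf.continuousOn
    have h2 : ContinuousOn (deriv f) D := ((hfa' hD hf).continuousOn)
    have h3 : ContinuousOn (iteratedDeriv 2 f) D := ((hfa2 hD hf).continuousOn)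
    apply ContinuousOn.add
    · apply ContinuousOn.mul
      · apply ContinuousOn.mul continuousOn_const
        exact h3.comp continuous_fst.continuousOn (fun p hp => hp.1)
      · exact ((h1.comp (continuous_fst.add continuous_snd).continuousOn
          (fun p hp => hp.2)).sub (h1.comp continuous_fst.continuousOn (fun p hp => hp.1)))
    · exact (h2.comp continuous_fst.continuousOn (fun p hp => hp.1)).pow 2
  have : tamU f D = {p : ℂ × ℂ | p.1 ∈ D ∧ p.1 + p.2 ∈ D} ∩ tamDen f ⁻¹' {0}ᶜ := by
    ext p; simp [tamU, Set.mem_setOf_eq, and_assoc]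
  rw [this]
  exact hcont.isOpen_inter_preimage hW isOpen_compl_singleton

lemma tamV_analytic : AnalyticOnNhd ℂ (fun p : ℂ × ℂ => tamanoiV f p.1 p.2) (tamU f D) := by
  intro p hp
  obtain ⟨h1, h2, h3⟩ := hp
  have hfst : AnalyticAt ℂ (fun p : ℂ × ℂ => p.1) p := analyticAt_fst
  have hsum : AnalyticAt ℂ (fun p : ℂ × ℂ => p.1 + p.2) p := analyticAt_fst.add analyticAt_snd
  have ha : AnalyticAt ℂ (deriv f ∘ fun p : ℂ × ℂ => p.1) p :=
    AnalyticAt.comp ((hfa' hD hf) _ h1) hfst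
  have hc : AnalyticAt ℂ (iteratedDeriv 2 f ∘ fun p : ℂ × ℂ => p.1) p :=
    AnalyticAt.comp ((hfa2 hD hf) _ h1) hfst
  have hF1 : AnalyticAt ℂ (f ∘ fun p : ℂ × ℂ => p.1 + p.2) p :=
    AnalyticAt.comp ((hfa hD hf) _ h2) hsum
  have hF2 : AnalyticAt ℂ (f ∘ fun p : ℂ × ℂ => p.1) p :=
    AnalyticAt.comp ((hfa hD hf) _ h1) hfst
  have hF : AnalyticAt ℂ (fun p : ℂ × ℂ => f (p.1 + p.2) - f p.1) p := hF1.sub hF2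
  exact (ha.mul hF).div ((((analyticAt_const).mul hc).mul hF).add (ha.pow 2)) h3

lemma tamV_hasDerivAt_w {z w : ℂ} (h2 : z + w ∈ D) (h3 : tamDen f (z,w) ≠ 0) :
    HasDerivAt (tamanoiV f z)
      ((deriv f z * deriv f (z+w) * tamDen f (z,w)
        - deriv f z * (f (z+w) - f z) * ((1/2) * iteratedDeriv 2 f z * deriv f (z+w)))
        / (tamDen f (z,w))^2) w := by
  have hfw : HasDerivAt (fun t => f (z + t)) (deriv f (z+w)) w := by
    have h0 : HasDerivAt f (deriv f (z+w)) (z+w) :=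
      (hf.differentiableAt (hD.mem_nhds h2)).hasDerivAt
    have h1 : HasDerivAt (fun t : ℂ => z + t) 1 w := (hasDerivAt_id w).const_add z
    have := h0.comp w h1; rwa [mul_one] at this
  have hnum : HasDerivAt (fun t => deriv f z * (f (z + t) - f z))
      (deriv f z * deriv f (z+w)) w := by
    simpa using ((hfw.sub_const (f z)).const_mul (deriv f z))
  have hden : HasDerivAt
      (fun t => (1/2) * iteratedDeriv 2 f z * (f (z + t) - f z) + (deriv f z)^2)
      ((1/2) * iteratedDeriv 2 f z * deriv f (z+w)) w := by
    simpa using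
      (((hfw.sub_const (f z)).const_mul ((1/2) * iteratedDeriv 2 f z)).add_const ((deriv f z)^2))
  exact hnum.div hden h3

lemma tamV_hasDerivAt_z {z w : ℂ} (h1 : z ∈ D) (h2 : z + w ∈ D) (h3 : tamDen f (z,w) ≠ 0) :
    HasDerivAt (fun t => tamanoiV f t w)
      (((iteratedDeriv 2 f z * (f (z+w) - f z) + deriv f z * (deriv f (z+w) - deriv f z))
          * tamDen f (z,w)
        - deriv f z * (f (z+w) - f z) *
          ((1/2) * iteratedDeriv 3 f z * (f (z+w) - f z)
            + (1/2) * iteratedDeriv 2 f z * (deriv f (z+w) - deriv f z)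
            + 2 * deriv f z * iteratedDeriv 2 f z))
        / (tamDen f (z,w))^2) z := by
  have hA : HasDerivAt (deriv f) (iteratedDeriv 2 f z) z := by
    rw [show iteratedDeriv 2 f z = deriv (deriv f) z from congrFun iD2_eq z]
    exact ((hfa' hD hf) z h1).differentiableAt.hasDerivAt
  have hC : HasDerivAt (iteratedDeriv 2 f) (iteratedDeriv 3 f z) z := by
    rw [show iteratedDeriv 3 f z = deriv (iteratedDeriv 2 f) z from congrFun iD3_eq z]
    exact ((hfa2 hD hf) z h1).differentiableAt.hasDerivAt
  have hfw : HasDerivAt (fun t => f (t + w)) (deriv f (z+w)) z := by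
    have h0 : HasDerivAt f (deriv f (z+w)) (z+w) :=
      (hf.differentiableAt (hD.mem_nhds h2)).hasDerivAt
    have hid : HasDerivAt (fun t : ℂ => t + w) 1 z := (hasDerivAt_id z).add_const w
    have := h0.comp z hid; rwa [mul_one] at this
  have hfz : HasDerivAt f (deriv f z) z := (hf.differentiableAt (hD.mem_nhds h1)).hasDerivAt
  have hnum : HasDerivAt (fun t => deriv f t * (f (t + w) - f t))
      (iteratedDeriv 2 f z * (f (z+w) - f z) + deriv f z * (deriv f (z+w) - deriv f z)) z :=
    hA.mul (hfw.sub hfz)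
  have hden : HasDerivAt
      (fun t => (1/2) * iteratedDeriv 2 f t * (f (t + w) - f t) + (deriv f t)^2)
      ((1/2) * iteratedDeriv 3 f z * (f (z+w) - f z)
        + (1/2) * iteratedDeriv 2 f z * (deriv f (z+w) - deriv f z)
        + 2 * deriv f z * iteratedDeriv 2 f z) z := by
    have hp1 : HasDerivAt (fun t => (1/2) * iteratedDeriv 2 f t * (f (t + w) - f t))
        ((1/2) * iteratedDeriv 3 f z * (f (z+w) - f z)
          + (1/2) * iteratedDeriv 2 f z * (deriv f (z+w) - deriv f z)) z := by
      have := (hC.const_mul ((1:ℂ)/2)).fun_mul (hfw.fun_sub hfz)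
      simpa [mul_comm, mul_assoc, mul_left_comm] using this
    have hp2 : HasDerivAt (fun t => (deriv f t)^2) (2 * deriv f z * iteratedDeriv 2 f z) z := by
      have := hA.fun_pow 2
      simpa [mul_comm, mul_assoc, mul_left_comm] using this
    exact hp1.add hp2
  exact hnum.div hden h3

lemma tamV_pde (hf' : ∀ z ∈ D, deriv f z ≠ 0) {z w : ℂ} (hzw : (z,w) ∈ tamU f D) :
    deriv (tamanoiV f z) w = 1 + fderiv ℂ (fun p : ℂ × ℂ => tamanoiV f p.1 p.2) (z,w) (1,0)
      + (1/2) * schw f z * (tamanoiV f z w)^2 := by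
  obtain ⟨h1,h2,h3⟩ := hzw
  have hA := hf' z h1
  have hpd : fderiv ℂ (fun p : ℂ × ℂ => tamanoiV f p.1 p.2) (z,w) (1,0)
      = deriv (fun t => tamanoiV f t w) z := by
    exact (deriv_slice1 ((tamV_analytic hD hf (z,w) ⟨h1,h2,h3⟩).differentiableAt)).symm
  rw [hpd, (tamV_hasDerivAt_w hD hf h2 h3).deriv, (tamV_hasDerivAt_z hD hf h1 h2 h3).deriv]
  have h3' : (1/2) * iteratedDeriv 2 f z * (f (z+w) - f z) + (deriv f z)^2 ≠ 0 := h3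
  have hs : schw f z = (2 * iteratedDeriv 3 f z * deriv f z - 3 * (iteratedDeriv 2 f z)^2)
      / (2 * (deriv f z)^2) := schw_frac _ _ _ hA
  rw [hs]
  exact tam_algebra' (deriv f z) (iteratedDeriv 2 f z) (iteratedDeriv 3 f z)
    (f (z+w) - f z) (deriv f (z+w)) hA h3'

omit hD hf in
lemma tamV_zero (z : ℂ) : tamanoiV f z 0 = 0 := by simp [tamanoiV]

variable (hf' : ∀ z ∈ D, deriv f z ≠ 0)
include hf'

lemma tam_mem_U {z : ℂ} (hz : z ∈ D) : ((z : ℂ), (0 : ℂ)) ∈ tamU f D := by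
  refine ⟨hz, by simpa using hz, ?_⟩
  have : tamDen f (z, 0) = (deriv f z)^2 := by simp [tamDen]
  rw [this]
  exact pow_ne_zero 2 (hf' z hz)

lemma tam_master {n : ℕ} (hn : 1 ≤ n) {z : ℂ} (hz : z ∈ D) :
    tamanoiS f n z = deriv (fun t => iteratedDeriv n (tamanoiV f t) 0) z
      + (1/2) * schw f z * ∑ k ∈ Finset.Icc 1 (n-1),
          (n.choose k : ℂ) * tamanoiS f (k-1) z * tamanoiS f (n-k-1) z := by
  have hU := tamU_open hD hf
  have hG := tamV_analytic hD hf
  have hz0 := tam_mem_U hD hf hf' hz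
  set G : ℂ × ℂ → ℂ := fun p => tamanoiV f p.1 p.2 with hG_def
  -- eventual PDE along the slice
  have hev : deriv (tamanoiV f z) =ᶠ[𝓝 (0:ℂ)]
      fun w => 1 + (fderiv ℂ G (z,w) (1,0)
        + (1/2) * schw f z * (tamanoiV f z w * tamanoiV f z w)) := by
    have hc : ContinuousAt (fun t : ℂ => ((z : ℂ), t)) 0 :=
      (continuous_prodMk.mpr ⟨continuous_const, continuous_id⟩).continuousAt
    filter_upwards [hc.preimage_mem_nhds (hU.mem_nhds hz0)] with w hw
    rw [tamV_pde hD hf hf' hw]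
    ring
  -- analyticity of the slices at 0
  have hanV : AnalyticAt ℂ (tamanoiV f z) 0 := by
    have h1 : AnalyticAt ℂ (fun t : ℂ => ((z : ℂ), t)) 0 :=
      analyticAt_const.prod analyticAt_id
    exact AnalyticAt.comp (hG _ hz0) h1
  have han1 : AnalyticAt ℂ (fun w => fderiv ℂ G (z,w) (1,0)) 0 := by
    have h1 : AnalyticAt ℂ (fun t : ℂ => ((z : ℂ), t)) 0 :=
      analyticAt_const.prod analyticAt_id
    exact AnalyticAt.comp ((anOn_pdz hG) _ hz0) h1
  have hanV2 : AnalyticAt ℂ (fun w => tamanoiV f z w * tamanoiV f z w) 0 := hanV.mul hanV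
  obtain ⟨m, rfl⟩ : ∃ m, n = m + 1 := ⟨n - 1, (Nat.sub_add_cancel hn).symm⟩
  have step1 : tamanoiS f (m+1) z = iteratedDeriv (m+1) (deriv (tamanoiV f z)) 0 := by
    rw [tamanoiS, ← iteratedDeriv_succ']
  rw [step1, hev.iteratedDeriv_eq (m+1),
    show (fun w => 1 + (fderiv ℂ G (z,w) (1,0)
        + (1/2) * schw f z * (tamanoiV f z w * tamanoiV f z w)))
      = (fun w => (1:ℂ) + ((fun w => fderiv ℂ G (z,w) (1,0)) w
        + (fun w => (1/2) * schw f z * (tamanoiV f z w * tamanoiV f z w)) w)) from rfl,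
    iteratedDeriv_const_add_at 1 m,
    iteratedDeriv_add_at (v := fun w => (1/2) * schw f z * (tamanoiV f z w * tamanoiV f z w))
      (m+1) han1 ((analyticAt_const.mul hanV2)),
    iteratedDeriv_const_mul_at ((1:ℂ)/2 * schw f z) (m+1) hanV2,
    iteratedDeriv_mul_at (m+1) hanV hanV]
  have hL : iteratedDeriv (m+1) (fun w => fderiv ℂ G (z,w) (1,0)) 0
      = deriv (fun t => iteratedDeriv (m+1) (tamanoiV f t) 0) z :=
    (cross_deriv hU hG (m+1) hz0).symm
  rw [hL]
  congr 1
  congr 1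
  have hzero : iteratedDeriv 0 (tamanoiV f z) 0 = 0 := by
    simpa using tamV_zero (f := f) z
  have hterm : ∀ k ∈ Finset.Icc 1 (m+1-1),
      ((m+1).choose k : ℂ) * tamanoiS f (k-1) z * tamanoiS f (m+1-k-1) z
      = ((m+1).choose k : ℂ) *
          (iteratedDeriv k (tamanoiV f z) 0 * iteratedDeriv (m+1-k) (tamanoiV f z) 0) := by
    intro k hk
    simp only [Finset.mem_Icc] at hk
    unfold tamanoiS
    rw [(by omega : k - 1 + 1 = k), (by omega : m+1-k-1+1 = m+1-k)]
    ring
  rw [Finset.sum_congr rfl hterm]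
  refine (Finset.sum_subset ?_ ?_).symm
  · intro k hk
    simp only [Finset.mem_Icc] at hk
    exact Finset.mem_range.mpr (by omega)
  · intro k hk hk'
    simp only [Finset.mem_range] at hk
    simp only [Finset.mem_Icc] at hk'
    rcases Nat.eq_zero_or_pos k with h0 | h1
    · subst h0; rw [hzero]; ring
    · have hkn : k = m + 1 := by omega
      subst hkn
      rw [Nat.sub_self, hzero]; ring

lemma tamS_zero {z : ℂ} (hz : z ∈ D) : tamanoiS f 0 z = 1 := by
  have hz0 := tam_mem_U hD hf hf' hz
  have hdiff : DifferentiableAt ℂ (fun p : ℂ × ℂ => tamanoiV f p.1 p.2) (z,0) :=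
    (tamV_analytic hD hf _ hz0).differentiableAt
  have h1 : fderiv ℂ (fun p : ℂ × ℂ => tamanoiV f p.1 p.2) (z,0) (1,0) = 0 := by
    have hsl := deriv_slice1 (g := fun p : ℂ × ℂ => tamanoiV f p.1 p.2) hdiff
    rw [show (fun t => tamanoiV f t 0) = (fun _ : ℂ => (0:ℂ)) from
      funext (fun t => tamV_zero (f := f) t), deriv_const] at hsl
    exact hsl.symm
  have : tamanoiS f 0 z = deriv (tamanoiV f z) 0 := by
    rw [tamanoiS, iteratedDeriv_one]
  rw [this, tamV_pde hD hf hf' hz0, h1, tamV_zero (f := f) z]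
  ring

lemma tamS_one {z : ℂ} (hz : z ∈ D) : tamanoiS f 1 z = 0 := by
  have h := tam_master hD hf hf' (le_refl 1) hz
  rw [h]
  have hd : (fun t => iteratedDeriv 1 (tamanoiV f t) 0) =ᶠ[𝓝 z] fun _ => (1:ℂ) := by
    filter_upwards [hD.mem_nhds hz] with t ht
    exact tamS_zero hD hf hf' ht
  rw [hd.deriv_eq, deriv_const]
  norm_num

lemma tamS_two {z : ℂ} (hz : z ∈ D) : tamanoiS f 2 z = schw f z := by
  have h := tam_master hD hf hf' (by norm_num : 1 ≤ 2) hz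
  rw [h]
  have hd : (fun t => iteratedDeriv 2 (tamanoiV f t) 0) =ᶠ[𝓝 z] fun _ => (0:ℂ) := by
    filter_upwards [hD.mem_nhds hz] with t ht
    exact tamS_one hD hf hf' ht
  rw [hd.deriv_eq, deriv_const]
  have h0 := tamS_zero hD hf hf' hz
  simp [h0]
  ring
end setup

/-- Recursion formula for Tamanoi's Schwarzian derivatives. -/
theorem tamanoi_recursion (D : Set ℂ) (hD : IsOpen D) (f : ℂ → ℂ)
    (hf : DifferentiableOn ℂ f D) (hf' : ∀ z ∈ D, deriv f z ≠ 0)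
    (n : ℕ) (hn : 3 ≤ n) (z : ℂ) (hz : z ∈ D) :
    tamanoiS f n z =
      deriv (tamanoiS f (n - 1)) z +
        (1 / 2) * tamanoiS f 2 z *
          ∑ k ∈ Finset.Icc 1 (n - 1),
            (n.choose k : ℂ) * tamanoiS f (k - 1) z * tamanoiS f (n - k - 1) z := by
  have h := tam_master hD hf hf' (by omega : 1 ≤ n) hz
  have h2 := tamS_two hD hf hf' hz
  have hfun : tamanoiS f (n-1) = fun t => iteratedDeriv n (tamanoiV f t) 0 := by
    funext t
    unfold tamanoiS
    rw [Nat.sub_add_cancel (by omega : 1 ≤ n)]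
  rw [h, ← h2, hfun]
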